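/- Let G be a group generated by a finite set {g_1, ..., g_n}. Then G has Kazhdan's property (T) if and only if for every unitary representation π of G on a complex Hilbert space, the condition that z_0 I + z_1π(g_1) + ⋯ + z_nπ(g_n) is not invertible for every nonzero z ∈ ℂ^{n+1} with z_0 + ⋯ + z_n = 0 (i.e., H_0 ⊆ p(A_π)) implies that π has a nonzero invariant vector (a nonzero ξ with π(g)ξ = ξ for all g ∈ G). -/

import Mathlib

/-- A unitary representation of a group `G` on a complex Hilbert space. -/
structure UnitaryRep (G : Type) [Group G] where
  /-- the underlying Hilbert space -/
  space : Type
  [ngroup : NormedAddCommGroup space]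
  [ips : InnerProductSpace ℂ space]
  [complete : CompleteSpace space]
  /-- the representation -/
  rep : G →* (space →L[ℂ] space)
  mem_unitary : ∀ x : G, rep x ∈ unitary (space →L[ℂ] space)

attribute [instance] UnitaryRep.ngroup UnitaryRep.ips UnitaryRep.complete

/-- A unitary representation almost has invariant vectors (equivalently, it weakly contains the
trivial representation). -/
def UnitaryRep.AlmostInv {G : Type} [Group G] (ρ : UnitaryRep G) : Prop :=
  ∀ (F : Finset G) (ε : ℝ), 0 < ε → ∃ ξ : ρ.space, ‖ξ‖ = 1 ∧ ∀ s ∈ F, ‖ρ.rep s ξ - ξ‖ < ε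

/-- A group has Kazhdan's property (T) if every unitary representation that almost has
invariant vectors has a nonzero invariant vector. -/
def HasPropertyT (G : Type) [Group G] : Prop :=
  ∀ ρ : UnitaryRep G, ρ.AlmostInv → ∃ ξ : ρ.space, ξ ≠ 0 ∧ ∀ x : G, ρ.rep x ξ = ξ

open ContinuousLinearMap

section Hilbert

set_option linter.unusedSectionVars false

variable {H : Type} [NormedAddCommGroup H] [InnerProductSpace ℂ H] [CompleteSpace H]

local notation "⟪" x ", " y "⟫" => @inner ℂ _ _ x y

private lemma aux_isUnit (T : H →L[ℂ] H) (c : ℝ) (hc : 0 < c)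
    (h1 : ∀ x, c * ‖x‖ ≤ ‖T x‖) (h2 : ∀ x, c * ‖x‖ ≤ ‖adjoint T x‖) : IsUnit T := by
  have hinj : Function.Injective T := by
    intro x y hxy
    have h0 : T (x - y) = 0 := by rw [map_sub, hxy, sub_self]
    have := h1 (x - y)
    rw [h0, norm_zero] at this
    have hxy0 : ‖x - y‖ = 0 := by nlinarith [norm_nonneg (x - y)]
    rwa [norm_eq_zero, sub_eq_zero] at hxy0
  have hal : AntilipschitzWith c.toNNReal⁻¹ T := by
    apply T.antilipschitz_of_bound
    intro x
    rw [NNReal.coe_inv, Real.coe_toNNReal _ hc.le]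
    calc ‖x‖ = c⁻¹ * (c * ‖x‖) := by field_simp
      _ ≤ c⁻¹ * ‖T x‖ := mul_le_mul_of_nonneg_left (h1 x) (inv_pos.mpr hc).le
  have hclosed : IsClosed (Set.range T) := hal.isClosed_range T.uniformContinuous
  have hclosed' : IsClosed ((LinearMap.range (T : H →ₗ[ℂ] H) : Submodule ℂ H) : Set H) := by
    have : ((LinearMap.range (T : H →ₗ[ℂ] H) : Submodule ℂ H) : Set H) = Set.range T := by
      ext x; simp [LinearMap.mem_range]
    rwa [this]
  haveI : CompleteSpace ((LinearMap.range (T : H →ₗ[ℂ] H) : Submodule ℂ H)) := hclosed'.completeSpace_coe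
  have horth : (LinearMap.range (T : H →ₗ[ℂ] H))ᗮ = ⊥ := by
    rw [Submodule.eq_bot_iff]
    intro x hx
    have hTx : ⟪T (adjoint T x), x⟫ = 0 :=
      hx _ (LinearMap.mem_range.mpr ⟨adjoint T x, rfl⟩)
    have hAx : ⟪adjoint T x, adjoint T x⟫ = 0 := by
      rw [adjoint_inner_left]
      exact inner_eq_zero_symm.mpr hTx
    have hA0 : adjoint T x = 0 := by
      rwa [inner_self_eq_zero] at hAx
    have := h2 x
    rw [hA0, norm_zero] at this
    have hx0 : ‖x‖ = 0 := by nlinarith [norm_nonneg x]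
    rwa [norm_eq_zero] at hx0
  have hrange : LinearMap.range (T : H →ₗ[ℂ] H) = ⊤ := Submodule.orthogonal_eq_bot_iff.mp horth
  exact ContinuousLinearMap.isUnit_iff_bijective.mpr
    ⟨hinj, LinearMap.range_eq_top.mp hrange⟩

private lemma aux_scale (S : H →L[ℂ] H) (ε : ℝ) (h : ∀ ξ : H, ‖ξ‖ = 1 → ε ≤ ‖S ξ‖) :
    ∀ x : H, ε * ‖x‖ ≤ ‖S x‖ := by
  intro x
  rcases eq_or_ne x 0 with rfl | hx
  · simp
  · have hn : ‖x‖ ≠ 0 := norm_ne_zero_iff.mpr hx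
    have h1 : ‖(‖x‖⁻¹ : ℂ) • x‖ = 1 := by
      rw [norm_smul]
      simp [hn]
    have := h _ h1
    rw [map_smul, norm_smul] at this
    simp only [norm_inv, Complex.norm_real, norm_norm] at this
    have hp : (0:ℝ) < ‖x‖ := lt_of_le_of_ne (norm_nonneg x) (Ne.symm hn)
    calc ε * ‖x‖ ≤ (‖x‖⁻¹ * ‖S x‖) * ‖x‖ := by nlinarith
      _ = ‖S x‖ := by field_simp

private lemma aux_approx (T : H →L[ℂ] H) (hT : ¬ IsUnit T) (ε : ℝ) (hε : 0 < ε) :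
    ∃ ξ : H, ‖ξ‖ = 1 ∧ (‖T ξ‖ < ε ∨ ‖adjoint T ξ‖ < ε) := by
  by_contra h
  push_neg at h
  apply hT
  apply aux_isUnit T ε hε
  · exact aux_scale T ε fun ξ hξ => (h ξ hξ).1
  · exact aux_scale (adjoint T) ε fun ξ hξ => (h ξ hξ).2

end Hilbert

private lemma aux_norm_rep {G : Type} [Group G] (ρ : UnitaryRep G) (s : G) (ξ : ρ.space) :
    ‖ρ.rep s ξ‖ = ‖ξ‖ :=
  ContinuousLinearMap.norm_map_of_mem_unitary (ρ.mem_unitary s) ξ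

private lemma aux_word {G : Type} [Group G] {n : ℕ} {g : Fin n → G}
    (hgen : Subgroup.closure (Set.range g) = ⊤) (ρ : UnitaryRep G) (s : G) :
    ∃ C : ℝ, 0 ≤ C ∧
      ∀ ξ : ρ.space, ‖ρ.rep s ξ - ξ‖ ≤ C * ∑ i, ‖ρ.rep (g i) ξ - ξ‖ := by
  have hs : s ∈ Subgroup.closure (Set.range g) := hgen ▸ Subgroup.mem_top s
  induction hs using Subgroup.closure_induction with
  | mem x hx =>
    obtain ⟨i, rfl⟩ := hx
    refine ⟨1, zero_le_one, fun ξ => ?_⟩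
    rw [one_mul]
    exact Finset.single_le_sum (f := fun j => ‖ρ.rep (g j) ξ - ξ‖)
      (fun j _ => norm_nonneg _) (Finset.mem_univ i)
  | one =>
    refine ⟨0, le_refl 0, fun ξ => by simp⟩
  | mul x y hx hy ihx ihy =>
    obtain ⟨Cx, hCx0, hCx⟩ := ihx
    obtain ⟨Cy, hCy0, hCy⟩ := ihy
    refine ⟨Cx + Cy, by positivity, fun ξ => ?_⟩
    have heq : ρ.rep (x * y) ξ - ξ = ρ.rep x (ρ.rep y ξ - ξ) + (ρ.rep x ξ - ξ) := by
      rw [map_mul, map_sub]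
      simp [ContinuousLinearMap.mul_apply]
    calc ‖ρ.rep (x * y) ξ - ξ‖ ≤ ‖ρ.rep x (ρ.rep y ξ - ξ)‖ + ‖ρ.rep x ξ - ξ‖ := by
          rw [heq]; exact norm_add_le _ _
      _ = ‖ρ.rep y ξ - ξ‖ + ‖ρ.rep x ξ - ξ‖ := by rw [aux_norm_rep]
      _ ≤ Cy * (∑ i, ‖ρ.rep (g i) ξ - ξ‖) + Cx * (∑ i, ‖ρ.rep (g i) ξ - ξ‖) :=
          add_le_add (hCy ξ) (hCx ξ)
      _ = (Cx + Cy) * ∑ i, ‖ρ.rep (g i) ξ - ξ‖ := by ring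
  | inv x hx ihx =>
    obtain ⟨Cx, hCx0, hCx⟩ := ihx
    refine ⟨Cx, hCx0, fun ξ => ?_⟩
    have heq : ‖ρ.rep x⁻¹ ξ - ξ‖ = ‖ρ.rep x ξ - ξ‖ := by
      have h1 : ρ.rep x (ρ.rep x⁻¹ ξ - ξ) = ξ - ρ.rep x ξ := by
        rw [map_sub]
        congr 1
        rw [← ContinuousLinearMap.mul_apply, ← map_mul, mul_inv_cancel, map_one,
          ContinuousLinearMap.one_apply]
      rw [← aux_norm_rep ρ x (ρ.rep x⁻¹ ξ - ξ), h1, norm_sub_rev]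
    rw [heq]
    exact hCx ξ

/-- A finitely generated group `G = ⟨g₁, ..., gₙ⟩` has Kazhdan's property (T) iff for every
unitary representation `π`, the inclusion `H₀ ⊆ p(A_π)` (the pencil
`z₀I + z₁π(g₁) + ⋯ + zₙπ(gₙ)` is not invertible for every nonzero `z` with
`z₀ + ⋯ + zₙ = 0`) implies that `π` has a nonzero invariant vector. -/
theorem stmt13 {G : Type} [Group G] (n : ℕ) (hn : 0 < n) (g : Fin n → G)
    (hgen : Subgroup.closure (Set.range g) = ⊤) :
    HasPropertyT G ↔
      ∀ ρ : UnitaryRep G,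
        (∀ z : Fin (n + 1) → ℂ, z ≠ 0 → ∑ i, z i = 0 →
          ¬ IsUnit (z 0 • (1 : ρ.space →L[ℂ] ρ.space) +
            ∑ i : Fin n, z i.succ • ρ.rep (g i))) →
        ∃ ξ : ρ.space, ξ ≠ 0 ∧ ∀ x : G, ρ.rep x ξ = ξ := by
  constructor
  · -- forward direction
    intro hPT ρ hpencil
    -- generators almost invariant
    have key : ∀ δ : ℝ, 0 < δ → ∃ ξ : ρ.space, ‖ξ‖ = 1 ∧ ∀ i, ‖ρ.rep (g i) ξ - ξ‖ < δ := by
      intro δ hδ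
      set z : Fin (n + 1) → ℂ := fun j => if j = 0 then (n : ℂ) else -1 with hzdef
      have hz0 : z ≠ 0 := by
        intro h
        have := congrFun h 0
        simp only [hzdef, if_pos rfl, Pi.zero_apply] at this
        exact_mod_cast absurd this (Nat.cast_ne_zero.mpr hn.ne')
      have hzsum : ∑ i, z i = 0 := by
        rw [Fin.sum_univ_succ]
        simp [hzdef, Fin.succ_ne_zero]
      set A : ρ.space →L[ℂ] ρ.space :=
        z 0 • (1 : ρ.space →L[ℂ] ρ.space) + ∑ i : Fin n, z i.succ • ρ.rep (g i) with hAdef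
      have hnotunit : ¬ IsUnit A := hpencil z hz0 hzsum
      obtain ⟨ξ, hξ1, hcase⟩ := aux_approx A hnotunit (δ ^ 2 / 2) (by positivity)
      have hself : @inner ℂ _ _ ξ ξ = (1 : ℂ) := by
        rw [inner_self_eq_norm_sq_to_K, hξ1]; norm_num
      have hinner : @inner ℂ _ _ (A ξ) ξ =
          (n : ℂ) - ∑ i, @inner ℂ _ _ (ρ.rep (g i) ξ) ξ := by
        simp only [hAdef, hzdef, if_pos rfl, Fin.succ_ne_zero, if_neg, ite_false,
          ContinuousLinearMap.add_apply, ContinuousLinearMap.smul_apply,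
          ContinuousLinearMap.one_apply, ContinuousLinearMap.sum_apply, neg_smul, one_smul,
          ContinuousLinearMap.neg_apply, inner_add_left, inner_smul_left, sum_inner,
          inner_neg_left, hself, mul_one, Complex.conj_natCast,
          sub_eq_add_neg, ← Finset.sum_neg_distrib]
      have hre : |((@inner ℂ _ _ (A ξ) ξ) : ℂ).re| < δ ^ 2 / 2 := by
        rcases hcase with hc | hc
        · calc |((@inner ℂ _ _ (A ξ) ξ) : ℂ).re| ≤ ‖(@inner ℂ _ _ (A ξ) ξ : ℂ)‖ :=
              Complex.abs_re_le_norm _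
            _ ≤ ‖A ξ‖ * ‖ξ‖ := norm_inner_le_norm _ _
            _ = ‖A ξ‖ := by rw [hξ1, mul_one]
            _ < δ ^ 2 / 2 := hc
        · have hadj : ((@inner ℂ _ _ (A ξ) ξ) : ℂ).re =
              ((@inner ℂ _ _ ((ContinuousLinearMap.adjoint A) ξ) ξ) : ℂ).re := by
            rw [ContinuousLinearMap.adjoint_inner_left,
              ← inner_conj_symm (𝕜 := ℂ) ξ (A ξ), Complex.conj_re]
          rw [hadj]
          calc |((@inner ℂ _ _ ((ContinuousLinearMap.adjoint A) ξ) ξ) : ℂ).re| ≤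
              ‖(@inner ℂ _ _ ((ContinuousLinearMap.adjoint A) ξ) ξ : ℂ)‖ :=
              Complex.abs_re_le_norm _
            _ ≤ ‖(ContinuousLinearMap.adjoint A) ξ‖ * ‖ξ‖ := norm_inner_le_norm _ _
            _ = ‖(ContinuousLinearMap.adjoint A) ξ‖ := by rw [hξ1, mul_one]
            _ < δ ^ 2 / 2 := hc
      set r : Fin n → ℝ := fun j => ((@inner ℂ _ _ (ρ.rep (g j) ξ) ξ) : ℂ).re with hrdef
      have hr1 : ∀ j, r j ≤ 1 := by
        intro j
        calc r j ≤ |((@inner ℂ _ _ (ρ.rep (g j) ξ) ξ) : ℂ).re| := le_abs_self _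
          _ ≤ ‖(@inner ℂ _ _ (ρ.rep (g j) ξ) ξ : ℂ)‖ := Complex.abs_re_le_norm _
          _ ≤ ‖ρ.rep (g j) ξ‖ * ‖ξ‖ := norm_inner_le_norm _ _
          _ = 1 := by rw [aux_norm_rep, hξ1, mul_one]
      have hresum : ((@inner ℂ _ _ (A ξ) ξ) : ℂ).re = (n : ℝ) - ∑ j, r j := by
        rw [hinner]
        simp [hrdef, Complex.sub_re, Complex.natCast_re]
      have hsumr : (n : ℝ) - ∑ j, r j < δ ^ 2 / 2 := by
        rw [← hresum]
        exact lt_of_abs_lt hre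
      refine ⟨ξ, hξ1, fun i => ?_⟩
      have hri : 1 - δ ^ 2 / 2 < r i := by
        have herase : r i + ∑ j ∈ Finset.univ.erase i, r j = ∑ j, r j :=
          Finset.add_sum_erase _ _ (Finset.mem_univ i)
        have hle : ∑ j ∈ Finset.univ.erase i, r j ≤ (n : ℝ) - 1 := by
          calc ∑ j ∈ Finset.univ.erase i, r j ≤ ∑ _j ∈ Finset.univ.erase i, (1 : ℝ) :=
              Finset.sum_le_sum fun j _ => hr1 j
            _ = ((Finset.univ.erase i).card : ℝ) := by simp
            _ = (n : ℝ) - 1 := by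
              rw [Finset.card_erase_of_mem (Finset.mem_univ i), Finset.card_univ,
                Fintype.card_fin]
              have : (1 : ℕ) ≤ n := hn
              push_cast [Nat.cast_sub this]
              ring
        linarith
      have hnormsq : ‖ρ.rep (g i) ξ - ξ‖ ^ 2 = 2 - 2 * r i := by
        rw [norm_sub_sq (𝕜 := ℂ) (ρ.rep (g i) ξ) ξ, aux_norm_rep, hξ1]
        simp [hrdef]
        ring
      have hlt : ‖ρ.rep (g i) ξ - ξ‖ ^ 2 < δ ^ 2 := by
        rw [hnormsq]; linarith
      exact lt_of_pow_lt_pow_left₀ 2 hδ.le hlt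
    -- almost invariance for all finite sets
    have hai : ρ.AlmostInv := by
      intro F ε hε
      choose C hC0 hCb using fun s => aux_word hgen ρ s
      set M : ℝ := 1 + ∑ s ∈ F, C s with hMdef
      have hM : 0 < M := by
        have : (0 : ℝ) ≤ ∑ s ∈ F, C s := Finset.sum_nonneg fun s _ => hC0 s
        linarith
      set δ : ℝ := ε / (M * (n + 1)) with hδdef
      have hδ : 0 < δ := by
        apply div_pos hε
        positivity
      obtain ⟨ξ, hξ1, hsmall⟩ := key δ hδ
      refine ⟨ξ, hξ1, fun s hs => ?_⟩
      have hD : ∑ i, ‖ρ.rep (g i) ξ - ξ‖ ≤ (n : ℝ) * δ := by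
        calc ∑ i, ‖ρ.rep (g i) ξ - ξ‖ ≤ ∑ _i : Fin n, δ :=
            Finset.sum_le_sum fun i _ => (hsmall i).le
          _ = (n : ℝ) * δ := by simp [mul_comm]
      have hCsM : C s ≤ M := by
        have : C s ≤ ∑ t ∈ F, C t := Finset.single_le_sum (fun t _ => hC0 t) hs
        linarith
      have hDnn : (0 : ℝ) ≤ ∑ i, ‖ρ.rep (g i) ξ - ξ‖ :=
        Finset.sum_nonneg fun i _ => norm_nonneg _
      calc ‖ρ.rep s ξ - ξ‖ ≤ C s * ∑ i, ‖ρ.rep (g i) ξ - ξ‖ := hCb s ξ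
        _ ≤ M * ((n : ℝ) * δ) := by
          apply mul_le_mul hCsM hD hDnn hM.le
        _ < ε := by
          have hMne : (M * ((n : ℝ) + 1)) ≠ 0 := by positivity
          have hδε : δ * (M * ((n : ℝ) + 1)) = ε := by
            rw [hδdef]; field_simp
          nlinarith [mul_pos hM hδ]
    exact hPT ρ hai
  · -- reverse direction
    intro hRHS ρ hai
    classical
    apply hRHS ρ
    intro z hz hzsum hu
    obtain ⟨u, hu⟩ := hu
    set A : ρ.space →L[ℂ] ρ.space :=
      z 0 • (1 : ρ.space →L[ℂ] ρ.space) + ∑ i : Fin n, z i.succ • ρ.rep (g i) with hAdef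
    set B : ρ.space →L[ℂ] ρ.space := ((u⁻¹ : (ρ.space →L[ℂ] ρ.space)ˣ) : ρ.space →L[ℂ] ρ.space)
      with hBdef
    set S : ℝ := ∑ i : Fin n, ‖z i.succ‖ with hSdef
    have hS0 : 0 ≤ S := Finset.sum_nonneg fun i _ => norm_nonneg _
    set ε : ℝ := (‖B‖ * S + 1)⁻¹ with hεdef
    have hε : 0 < ε := by
      apply inv_pos.mpr
      positivity
    obtain ⟨ξ, hξ1, hsmall⟩ := hai (Finset.image g Finset.univ) ε hε
    have hz0' : z 0 = - ∑ i : Fin n, z i.succ := by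
      rw [Fin.sum_univ_succ] at hzsum
      linear_combination hzsum
    have hAξ : A ξ = ∑ i : Fin n, z i.succ • (ρ.rep (g i) ξ - ξ) := by
      have hsum : (∑ i : Fin n, z i.succ • (ρ.rep (g i) ξ - ξ)) =
          (∑ i : Fin n, z i.succ • ρ.rep (g i) ξ) - (∑ i : Fin n, z i.succ) • ξ := by
        simp [smul_sub, Finset.sum_sub_distrib, Finset.sum_smul]
      rw [hsum, hAdef]
      simp only [ContinuousLinearMap.add_apply, ContinuousLinearMap.smul_apply,
        ContinuousLinearMap.one_apply, ContinuousLinearMap.sum_apply,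
        ContinuousLinearMap.neg_apply, hz0', neg_smul]
      abel
    have hnorm : ‖A ξ‖ ≤ S * ε := by
      rw [hAξ]
      calc ‖∑ i : Fin n, z i.succ • (ρ.rep (g i) ξ - ξ)‖ ≤ ∑ i : Fin n, ‖z i.succ • (ρ.rep (g i) ξ - ξ)‖ :=
          norm_sum_le _ _
        _ ≤ ∑ i : Fin n, ‖z i.succ‖ * ε := by
          apply Finset.sum_le_sum
          intro i _
          rw [norm_smul]
          exact mul_le_mul_of_nonneg_left
            (hsmall (g i) (Finset.mem_image.mpr ⟨i, Finset.mem_univ i, rfl⟩)).le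
            (norm_nonneg _)
        _ = S * ε := by rw [hSdef, Finset.sum_mul]
    have hBA : B (A ξ) = ξ := by
      rw [← ContinuousLinearMap.mul_apply, hBdef, ← hu, ← Units.val_mul, inv_mul_cancel,
        Units.val_one, ContinuousLinearMap.one_apply]
    have hcontr : 1 ≤ ‖B‖ * (S * ε) := by
      calc (1 : ℝ) = ‖ξ‖ := hξ1.symm
        _ = ‖B (A ξ)‖ := by rw [hBA]
        _ ≤ ‖B‖ * ‖A ξ‖ := B.le_opNorm _
        _ ≤ ‖B‖ * (S * ε) := mul_le_mul_of_nonneg_left hnorm (norm_nonneg _)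
    have h1 : (‖B‖ * S + 1) * ε = 1 := by
      rw [hεdef]
      field_simp
    nlinarith [norm_nonneg B]
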